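/- Let B be a connected mutation-finite real quiver such that the highest denominator of the mutation class of B equals 5. Then no matrix in the mutation class of B contains a denominator-4 arrow; that is, no matrix C mutation-equivalent to B has an entry with |c_ij| = √2. -/

import Mathlib

open Real

noncomputable section

namespace RealQuiver

variable {n : ℕ}

/-- Mutation of a real quiver (a skew-symmetric real matrix) at vertex `k`. -/
def mutate (B : Matrix (Fin n) (Fin n) ℝ) (k : Fin n) : Matrix (Fin n) (Fin n) ℝ :=
  fun i j => if i = k ∨ j = k then -B i j
    else B i j + (|B i k| * B k j + B i k * |B k j|) / 2

/-- One mutation step. -/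
def MutStep (B C : Matrix (Fin n) (Fin n) ℝ) : Prop := ∃ k, C = mutate B k

/-- `C` is obtained from `B` by a finite sequence of mutations. -/
def Reachable (B C : Matrix (Fin n) (Fin n) ℝ) : Prop :=
  Relation.ReflTransGen MutStep B C

/-- `B` is mutation-finite. -/
def MutationFinite (B : Matrix (Fin n) (Fin n) ℝ) : Prop :=
  {C | Reachable B C}.Finite

/-- Simultaneous permutation of the indices of `B`. -/
def permute (B : Matrix (Fin n) (Fin n) ℝ) (σ : Equiv.Perm (Fin n)) :
    Matrix (Fin n) (Fin n) ℝ := fun i j => B (σ i) (σ j)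

/-- Mutation-equivalence: a finite sequence of mutations followed by a
simultaneous permutation of the indices. -/
def MutEquiv (B C : Matrix (Fin n) (Fin n) ℝ) : Prop :=
  ∃ C' σ, Reachable B C' ∧ C = permute C' σ

/-- The underlying (undirected) graph of a quiver. -/
def toGraph (B : Matrix (Fin n) (Fin n) ℝ) : SimpleGraph (Fin n) where
  Adj i j := i ≠ j ∧ (B i j ≠ 0 ∨ B j i ≠ 0)
  symm := ⟨fun i j h => ⟨h.1.symm, h.2.symm⟩⟩
  loopless := ⟨fun i h => h.1 rfl⟩

/-- Connectedness of a quiver. -/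
def Connected (B : Matrix (Fin n) (Fin n) ℝ) : Prop := (toGraph B).Connected

def IsSkewSymmetric (B : Matrix (Fin n) (Fin n) ℝ) : Prop :=
  ∀ i j, B j i = -B i j

/-- A quiver is cyclic if its directed graph (an arrow `i → j` whenever
`B i j > 0`) contains a directed cycle. -/
def Cyclic (B : Matrix (Fin n) (Fin n) ℝ) : Prop :=
  ∃ i, Relation.TransGen (fun a b => 0 < B a b) i i

def Acyclic (B : Matrix (Fin n) (Fin n) ℝ) : Prop := ¬ Cyclic B

/-- The rank-3 cyclic quiver `(a,b,c)`: `b₁₂ = a`, `b₂₃ = b`, `b₃₁ = c`. -/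
def cyclicQ (a b c : ℝ) : Matrix (Fin 3) (Fin 3) ℝ :=
  !![0, a, -c; -a, 0, b; c, -b, 0]

/-- The rank-3 acyclic quiver `(a,b,-c)`: `b₁₂ = a`, `b₂₃ = b`, `b₁₃ = c`. -/
def acyclicQ (a b c : ℝ) : Matrix (Fin 3) (Fin 3) ℝ :=
  !![0, a, c; -a, 0, b; -c, -b, 0]

/-- `d` is the highest denominator of the mutation class of `B`. -/
def HighestDenom (B : Matrix (Fin n) (Fin n) ℝ) (d : ℕ) : Prop :=
  (∀ C, MutEquiv B C → ∀ i j, i ≠ j →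
    C i j = 0 ∨ ∃ p q : ℕ, 2 * p < q ∧ q ≤ d ∧ |C i j| = 2 * Real.cos (π * p / q)) ∧
  (∃ C, MutEquiv B C ∧ ∃ i j, ∃ p : ℕ, 0 < p ∧ 2 * p < d ∧ Nat.gcd p d = 1 ∧
    |C i j| = 2 * Real.cos (π * p / d))

/-- The rank-4 quiver `L n` (even denominator `d = 2n`):
`b₁₂ = b₂₃ = 2cos(π/2n)`, `b₃₁ = 2`, `b₁₄ = b₄₃ = 2cos(π(n-1)/2n)`, `b₂₄ = 0`. -/
def Lq (n : ℕ) : Matrix (Fin 4) (Fin 4) ℝ :=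
  !![0, 2 * Real.cos (π / (2 * n)), -2, 2 * Real.cos (π * ((n : ℝ) - 1) / (2 * n));
     -(2 * Real.cos (π / (2 * n))), 0, 2 * Real.cos (π / (2 * n)), 0;
     2, -(2 * Real.cos (π / (2 * n))), 0, -(2 * Real.cos (π * ((n : ℝ) - 1) / (2 * n)));
     -(2 * Real.cos (π * ((n : ℝ) - 1) / (2 * n))), 0, 2 * Real.cos (π * ((n : ℝ) - 1) / (2 * n)), 0]

/-- The rank-4 quiver `M n` (even denominator `d = 2n`):
`b₁₂ = b₂₃ = 2cos(π/2n)`, `b₃₁ = 2`, `b₂₄ = 2cos(π(n-1)/2n)`, `b₁₄ = b₃₄ = 0`. -/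
def Mq (n : ℕ) : Matrix (Fin 4) (Fin 4) ℝ :=
  !![0, 2 * Real.cos (π / (2 * n)), -2, 0;
     -(2 * Real.cos (π / (2 * n))), 0, 2 * Real.cos (π / (2 * n)), 2 * Real.cos (π * ((n : ℝ) - 1) / (2 * n));
     2, -(2 * Real.cos (π / (2 * n))), 0, 0;
     0, -(2 * Real.cos (π * ((n : ℝ) - 1) / (2 * n))), 0, 0]

/-- The rank-4 quiver `O n` (odd denominator `d = 2n+1`):
`b₁₂ = b₂₃ = 2cos(π/d)`, `b₃₁ = 2`, `b₁₄ = b₂₄ = b₄₃ = 2cos(πn/d)`. -/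
def Oq (n : ℕ) : Matrix (Fin 4) (Fin 4) ℝ :=
  !![0, 2 * Real.cos (π / (2 * n + 1)), -2, 2 * Real.cos (π * n / (2 * n + 1));
     -(2 * Real.cos (π / (2 * n + 1))), 0, 2 * Real.cos (π / (2 * n + 1)), 2 * Real.cos (π * n / (2 * n + 1));
     2, -(2 * Real.cos (π / (2 * n + 1))), 0, -(2 * Real.cos (π * n / (2 * n + 1)));
     -(2 * Real.cos (π * n / (2 * n + 1))), -(2 * Real.cos (π * n / (2 * n + 1))), 2 * Real.cos (π * n / (2 * n + 1)), 0]


section Auxiliary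
set_option linter.dupNamespace false


def ev (a b c d : ℚ) : ℝ := a + b * √2 + c * √5 + d * √10

lemma s2_sq : √2 * √2 = 2 := Real.mul_self_sqrt (by norm_num)
lemma s5_sq : √5 * √5 = 5 := Real.mul_self_sqrt (by norm_num)
lemma s10_eq : √10 = √2 * √5 := by
  rw [show (10:ℝ) = 2 * 5 by norm_num, Real.sqrt_mul (by norm_num)]

lemma irr5 : Irrational (√5) := Nat.Prime.irrational_sqrt (by norm_num)

lemma irr10 : Irrational (√10) := by
  rw [show ((10:ℝ)) = ((10:ℕ):ℝ) by norm_num, irrational_sqrt_natCast_iff]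
  rintro ⟨r, hr⟩
  have : r ≤ 3 := by nlinarith
  interval_cases r <;> omega

lemma q2_ne {c d : ℚ} (h : ¬(c = 0 ∧ d = 0)) : (c:ℝ) + d * √2 ≠ 0 := by
  intro h0
  by_cases hd : d = 0
  · apply h
    refine ⟨?_, hd⟩
    rw [hd] at h0; push_cast at h0; simpa using h0
  · have hd' : (d:ℝ) ≠ 0 := by exact_mod_cast hd
    have : √2 = ((-c/d : ℚ) : ℝ) := by push_cast; field_simp; linarith
    exact irrational_sqrt_two ⟨_, this.symm⟩

lemma sqrt5_not_in_Q2 (p q : ℚ) : √5 ≠ p + q * √2 := by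
  intro h
  have h5 : ((p:ℝ) + q*√2) * ((p:ℝ) + q*√2) = 5 := by rw [← h]; exact s5_sq
  have h5' : ((p^2 + 2*q^2 - 5 : ℚ) : ℝ) + ((2*p*q : ℚ):ℝ) * √2 = 0 := by
    push_cast; linear_combination h5 - (q:ℝ)^2 * s2_sq
  by_cases hc : p^2 + 2*q^2 - 5 = 0 ∧ 2*p*q = 0
  · obtain ⟨h1, h2⟩ := hc
    rcases mul_eq_zero.mp (by linarith [h2] : (2*p)*q = 0) with h3 | hq
    · have hp : p = 0 := by linarith
      have hq0 : q ≠ 0 := by intro h0; rw [hp, h0] at h1; norm_num at h1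
      have h52 : √5 = (q:ℝ) * √2 := by rw [h, hp]; push_cast; ring
      have h10 : √10 = ((2*q:ℚ):ℝ) := by
        rw [s10_eq, h52]; push_cast; linear_combination (q:ℝ) * s2_sq
      exact irr10 ⟨_, h10.symm⟩
    · rw [hq] at h; push_cast at h
      exact irr5 ⟨p, by rw [h]; ring⟩
  · exact q2_ne hc h5'

lemma ev_eq_zero {a b c d : ℚ} (h : ev a b c d = 0) : a = 0 ∧ b = 0 ∧ c = 0 ∧ d = 0 := by
  unfold ev at h
  rw [s10_eq] at h
  have key : ((c:ℝ) + d * √2) = 0 := by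
    by_contra hv
    have hcd : ¬(c = 0 ∧ d = 0) := by
      rintro ⟨rfl, rfl⟩; apply hv; push_cast; ring
    have hdenom : (c:ℚ)^2 - 2*d^2 ≠ 0 := by
      intro h0
      have hcast : ((c:ℝ))^2 - 2*(d:ℝ)^2 = 0 := by exact_mod_cast congrArg (Rat.cast (K := ℝ)) h0
      have : ((c:ℝ) + d*√2) * ((c:ℝ) - d*√2) = 0 := by
        linear_combination hcast - (d:ℝ)^2 * s2_sq
      rcases mul_eq_zero.mp this with h1 | h2
      · exact hv h1
      · have hne : ¬(c = 0 ∧ -d = 0) := by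
          rintro ⟨rfl, hd⟩; exact hcd ⟨rfl, by linarith⟩
        exact q2_ne hne (by push_cast; linarith [h2])
    have hD' : ((c^2 - 2*d^2 : ℚ):ℝ) ≠ 0 := by exact_mod_cast hdenom
    have key2 : √5 * ((c^2 - 2*d^2 : ℚ):ℝ) = ((2*b*d - a*c:ℚ):ℝ) + ((a*d - b*c:ℚ):ℝ)*√2 := by
      push_cast
      linear_combination ((c:ℝ) - (d:ℝ)*√2) * h + ((b:ℝ)*(d:ℝ) + (d:ℝ)^2*√5) * s2_sq
    have hs5 : √5 = (((2*b*d - a*c)/(c^2 - 2*d^2) : ℚ):ℝ) + (((a*d - b*c)/(c^2 - 2*d^2) : ℚ):ℝ) * √2 := by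
      push_cast
      push_cast at key2 hD'
      field_simp
      linear_combination key2
    exact sqrt5_not_in_Q2 _ _ hs5
  have hcd : c = 0 ∧ d = 0 := by
    by_contra hc; exact q2_ne hc key
  obtain ⟨rfl, rfl⟩ := hcd
  have hab : a = 0 ∧ b = 0 := by
    by_contra hc
    refine q2_ne hc ?_
    push_cast at h ⊢
    linarith
  exact ⟨hab.1, hab.2, rfl, rfl⟩

lemma ev_inj {a b c d a' b' c' d' : ℚ} (h : ev a b c d = ev a' b' c' d') :
    a = a' ∧ b = b' ∧ c = c' ∧ d = d' := by
  have h0 : ev (a-a') (b-b') (c-c') (d-d') = 0 := by unfold ev at *; push_cast; linarith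
  have := ev_eq_zero h0
  exact ⟨by linarith [this.1], by linarith [this.2.1], by linarith [this.2.2.1], by linarith [this.2.2.2]⟩


lemma ev_neg (a b c d : ℚ) : -ev a b c d = ev (-a) (-b) (-c) (-d) := by
  unfold ev; push_cast; ring

lemma ev_add (a b c d a' b' c' d' : ℚ) :
    ev a b c d + ev a' b' c' d' = ev (a+a') (b+b') (c+c') (d+d') := by
  unfold ev; push_cast; ring

lemma ev_rat (a : ℚ) : ev a 0 0 0 = (a:ℝ) := by unfold ev; push_cast; ring

lemma ev_s2 : ev 0 1 0 0 = √2 := by unfold ev; push_cast; ring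

lemma ev_mul_rat (q a b c d : ℚ) : (q:ℝ) * ev a b c d = ev (q*a) (q*b) (q*c) (q*d) := by
  unfold ev; push_cast; ring

lemma ev_mul_s2s2 (b b' : ℚ) : ev 0 b 0 0 * ev 0 b' 0 0 = ev (2*b*b') 0 0 0 := by
  unfold ev; push_cast; linear_combination (b*b' : ℝ) * s2_sq

lemma ev_mul_s2phi (b a' c' : ℚ) : ev 0 b 0 0 * ev a' 0 c' 0 = ev 0 (b*a') 0 (b*c') := by
  unfold ev; rw [s10_eq]; push_cast; ring

lemma ev_mul_phiphi (a c a' c' : ℚ) :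
    ev a 0 c 0 * ev a' 0 c' 0 = ev (a*a' + 5*c*c') 0 (a*c' + a'*c) 0 := by
  unfold ev; push_cast; linear_combination (c*c' : ℝ) * s5_sq

lemma ev_eq_zero_iff {a b c d : ℚ} : ev a b c d = 0 ↔ a = 0 ∧ b = 0 ∧ c = 0 ∧ d = 0 := by
  constructor
  · exact ev_eq_zero
  · rintro ⟨rfl, rfl, rfl, rfl⟩; unfold ev; push_cast; ring

/-- the 11 allowed values -/
def SC : List (ℚ×ℚ×ℚ×ℚ) := [(0,0,0,0),(1,0,0,0),(-1,0,0,0),(2,0,0,0),(-2,0,0,0),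
  (0,1,0,0),(0,-1,0,0),(1/2,0,1/2,0),(-1/2,0,-1/2,0),(-1/2,0,1/2,0),(1/2,0,-1/2,0)]

def inS (z : ℝ) : Prop := ∃ q ∈ SC, z = ev q.1 q.2.1 q.2.2.1 q.2.2.2

lemma inS_tuple {a b c d : ℚ} (h : inS (ev a b c d)) : (a,b,c,d) ∈ SC := by
  obtain ⟨q, hq, he⟩ := h
  obtain ⟨h1, h2, h3, h4⟩ := ev_inj he
  rw [h1, h2, h3, h4]
  exact hq

def IsS2 (z : ℝ) : Prop := z = ev 0 1 0 0 ∨ z = ev 0 (-1) 0 0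
def IsPhiV (z : ℝ) : Prop :=
  ∃ a c : ℚ, (a = 1/2 ∨ a = -1/2) ∧ (c = 1/2 ∨ c = -1/2) ∧ z = ev a 0 c 0
def IsRatV (z : ℝ) : Prop := ∃ a : ℚ, z = ev a 0 0 0

lemma inS_trichotomy {z : ℝ} (h : inS z) : IsS2 z ∨ IsPhiV z ∨ IsRatV z := by
  obtain ⟨q, hq, rfl⟩ := h
  simp only [SC, List.mem_cons, List.not_mem_nil, or_false] at hq
  rcases hq with rfl|rfl|rfl|rfl|rfl|rfl|rfl|rfl|rfl|rfl|rfl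
  · exact Or.inr (Or.inr ⟨0, by norm_num⟩)
  · exact Or.inr (Or.inr ⟨1, by norm_num⟩)
  · exact Or.inr (Or.inr ⟨-1, by norm_num⟩)
  · exact Or.inr (Or.inr ⟨2, by norm_num⟩)
  · exact Or.inr (Or.inr ⟨-2, by norm_num⟩)
  · exact Or.inl (Or.inl (by norm_num [IsS2]))
  · exact Or.inl (by  right; norm_num)
  · exact Or.inr (Or.inl ⟨1/2, 1/2, Or.inl rfl, Or.inl rfl, by norm_num⟩)
  · exact Or.inr (Or.inl ⟨-1/2, -1/2, Or.inr rfl, Or.inr rfl, by norm_num⟩)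
  · exact Or.inr (Or.inl ⟨-1/2, 1/2, Or.inr rfl, Or.inl rfl, by norm_num⟩)
  · exact Or.inr (Or.inl ⟨1/2, -1/2, Or.inl rfl, Or.inr rfl, by norm_num⟩)

lemma IsS2_neg {z : ℝ} (h : IsS2 z) : IsS2 (-z) := by
  rcases h with rfl | rfl
  · right; rw [ev_neg]; norm_num
  · left; rw [ev_neg]; norm_num

lemma IsPhiV_neg {z : ℝ} (h : IsPhiV z) : IsPhiV (-z) := by
  obtain ⟨a, c, ha, hc, rfl⟩ := h
  refine ⟨-a, -c, ?_, ?_, (ev_neg _ _ _ _)⟩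
  · rcases ha with rfl | rfl
    · exact Or.inr (by norm_num)
    · exact Or.inl (by norm_num)
  · rcases hc with rfl | rfl
    · exact Or.inr (by norm_num)
    · exact Or.inl (by norm_num)

lemma IsS2_ne_zero {z : ℝ} (h : IsS2 z) : z ≠ 0 := by
  rcases h with rfl | rfl <;>
  · intro h0
    obtain ⟨-, h2, -, -⟩ := ev_eq_zero h0
    norm_num at h2

lemma IsPhiV_ne_zero {z : ℝ} (h : IsPhiV z) : z ≠ 0 := by
  obtain ⟨a, c, ha, hc, rfl⟩ := h
  intro h0
  obtain ⟨-, -, h3, -⟩ := ev_eq_zero h0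
  rcases hc with rfl | rfl <;> norm_num at h3

lemma not_IsS2_and_IsPhiV {z : ℝ} (h : IsS2 z) (h' : IsPhiV z) : False := by
  obtain ⟨a, c, _, hc, he⟩ := h'
  rcases h with rfl | rfl <;>
  · obtain ⟨_, h2, h3, _⟩ := ev_inj he
    rcases hc with rfl | rfl <;> norm_num at h2

lemma sqrt5_gt_one : (1:ℝ) < √5 := by
  nlinarith [s5_sq, Real.sqrt_nonneg 5]

lemma IsPhiV_pos_abs {z : ℝ} (h : IsPhiV z) : ∃ a c : ℚ, (a = 1/2 ∨ a = -1/2) ∧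
    (c = 1/2 ∨ c = -1/2) ∧ z = ev a 0 c 0 ∧ (0 < ev a 0 c 0 ↔ c = 1/2) := by
  obtain ⟨a, c, ha, hc, rfl⟩ := h
  refine ⟨a, c, ha, hc, rfl, ?_⟩
  unfold ev
  rcases ha with rfl|rfl <;> rcases hc with rfl|rfl <;> push_cast <;>
    constructor <;> intro h5 <;> first | rfl | nlinarith [sqrt5_gt_one] | norm_num at h5

def mutTerm (x y : ℝ) : ℝ := (|x| * y + x * |y|) / 2

lemma mutTerm_nonpos {x y : ℝ} (h : x * y ≤ 0) : mutTerm x y = 0 := by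
  unfold mutTerm
  rcases le_or_gt x 0 with hx | hx
  · rcases le_or_gt y 0 with hy | hy
    · have hxy : x * y = 0 := le_antisymm h (by nlinarith)
      rcases mul_eq_zero.mp hxy with rfl | rfl <;> simp
    · rw [abs_of_nonpos hx, abs_of_pos hy]; ring
  · rcases le_or_gt y 0 with hy | hy
    · rw [abs_of_pos hx, abs_of_nonpos hy]; ring
    · nlinarith
lemma mutTerm_pos_eq {x y : ℝ} (h : 0 < x * y) : mutTerm x y = |x| * y := by
  unfold mutTerm
  rcases mul_pos_iff.mp h with ⟨hx, hy⟩ | ⟨hx, hy⟩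
  · rw [abs_of_pos hx, abs_of_pos hy]; ring
  · rw [abs_of_neg hx, abs_of_neg hy]; ring

lemma ev_neg_s2 : ev 0 (-1) 0 0 = -√2 := by unfold ev; push_cast; ring

lemma abs_IsS2 {z : ℝ} (h : IsS2 z) : |z| = ev 0 1 0 0 := by
  rcases h with rfl | rfl
  · rw [ev_s2, abs_of_nonneg (Real.sqrt_nonneg 2)]
  · rw [ev_neg_s2, abs_neg, abs_of_nonneg (Real.sqrt_nonneg 2), ev_s2]

lemma abs_rat (a : ℚ) : |ev a 0 0 0| = ev |a| 0 0 0 := by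
  rw [ev_rat, ev_rat, Rat.cast_abs]

-- Part C : class machinery
variable {n : ℕ} {B C : Matrix (Fin n) (Fin n) ℝ}

lemma mutEquiv_self (B : Matrix (Fin n) (Fin n) ℝ) : MutEquiv B B :=
  ⟨B, 1, Relation.ReflTransGen.refl, by funext i j; simp [permute]⟩

lemma mutate_permute (C : Matrix (Fin n) (Fin n) ℝ) (σ : Equiv.Perm (Fin n)) (k : Fin n) :
    mutate (permute C σ) k = permute (mutate C (σ k)) σ := by
  funext i j
  simp only [mutate, permute]
  have hiff : (i = k ∨ j = k) ↔ (σ i = σ k ∨ σ j = σ k) := by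
    simp [EmbeddingLike.apply_eq_iff_eq]
  by_cases h : i = k ∨ j = k
  · rw [if_pos h, if_pos (hiff.mp h)]
  · rw [if_neg h, if_neg (fun hc => h (hiff.mpr hc))]

lemma mutEquiv_mutate (h : MutEquiv B C) (k : Fin n) : MutEquiv B (mutate C k) := by
  obtain ⟨C', σ, hr, rfl⟩ := h
  exact ⟨mutate C' (σ k), σ, hr.tail ⟨σ k, rfl⟩, (mutate_permute C' σ k).symm ▸ rfl⟩

lemma mutate_skew (h : IsSkewSymmetric C) (k : Fin n) : IsSkewSymmetric (mutate C k) := by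
  intro i j
  simp only [mutate]
  by_cases hij : i = k ∨ j = k
  · rw [if_pos hij, if_pos (hij.symm), h i j]
  · rw [if_neg hij, if_neg (fun hc => hij hc.symm), h i j, h i k, h k j]
    simp only [abs_neg]
    ring

lemma mutEquiv_skew (hB : IsSkewSymmetric B) (h : MutEquiv B C) : IsSkewSymmetric C := by
  obtain ⟨C', σ, hr, rfl⟩ := h
  have : IsSkewSymmetric C' := by
    induction hr with
    | refl => exact hB
    | tail _ hstep ih => obtain ⟨k, rfl⟩ := hstep; exact mutate_skew ih k
  intro i j
  exact this (σ i) (σ j)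

lemma cos_2pi5 : 2 * Real.cos (π * 2 / 5) = ev (-1/2) 0 (1/2) 0 := by
  have h : π * 2 / 5 = 2 * (π / 5) := by ring
  rw [h, Real.cos_two_mul, Real.cos_pi_div_five]
  unfold ev
  push_cast
  linear_combination (1/4 : ℝ) * s5_sq

lemma cos_vals {p q : ℕ} (hpq : 2*p < q) (hq : q ≤ 5) :
    ∃ t : ℚ×ℚ×ℚ×ℚ, 2 * Real.cos (π * p / q) = ev t.1 t.2.1 t.2.2.1 t.2.2.2 ∧
      t ∈ SC ∧ (-t.1, -t.2.1, -t.2.2.1, -t.2.2.2) ∈ SC := by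
  have hp2 : p ≤ 2 := by omega
  interval_cases q <;> interval_cases p <;> try omega
  · exact ⟨(2,0,0,0), by norm_num [ev_rat], by norm_num [SC], by norm_num [SC]⟩
  · exact ⟨(2,0,0,0), by norm_num [ev_rat], by norm_num [SC], by norm_num [SC]⟩
  · exact ⟨(2,0,0,0), by norm_num [ev_rat], by norm_num [SC], by norm_num [SC]⟩
  · refine ⟨(1,0,0,0), ?_, by norm_num [SC], by norm_num [SC]⟩
    push_cast
    rw [show π * 1 / 3 = π / 3 by ring, Real.cos_pi_div_three]
    rw [ev_rat]; norm_num
  · exact ⟨(2,0,0,0), by norm_num [ev_rat], by norm_num [SC], by norm_num [SC]⟩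
  · refine ⟨(0,1,0,0), ?_, by norm_num [SC], by norm_num [SC]⟩
    push_cast
    rw [show π * 1 / 4 = π / 4 by ring, Real.cos_pi_div_four, ev_s2]
    ring
  · exact ⟨(2,0,0,0), by norm_num [ev_rat], by norm_num [SC], by norm_num [SC]⟩
  · refine ⟨(1/2,0,1/2,0), ?_, by norm_num [SC], by norm_num [SC]⟩
    push_cast
    rw [show π * 1 / 5 = π / 5 by ring, Real.cos_pi_div_five]
    unfold ev; push_cast; ring
  · refine ⟨(-1/2,0,1/2,0), ?_, by norm_num [SC], by norm_num [SC]⟩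
    push_cast
    exact cos_2pi5

lemma inS_zero : inS 0 := ⟨(0,0,0,0), by norm_num [SC], by norm_num [ev_rat]⟩

lemma class_inS (hB : IsSkewSymmetric B)
    (h1 : ∀ C, MutEquiv B C → ∀ i j, i ≠ j →
      C i j = 0 ∨ ∃ p q : ℕ, 2 * p < q ∧ q ≤ 5 ∧ |C i j| = 2 * Real.cos (π * p / q))
    (hC : MutEquiv B C) (i j : Fin n) : inS (C i j) := by
  by_cases hij : i = j
  · subst hij
    have := mutEquiv_skew hB hC i i
    have h0 : C i i = 0 := by linarith
    rw [h0]; exact inS_zero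
  rcases h1 C hC i j hij with h0 | ⟨p, q, hpq, hq, habs⟩
  · rw [h0]; exact inS_zero
  obtain ⟨t, hval, ht1, ht2⟩ := cos_vals hpq hq
  rcases abs_cases (C i j) with ⟨he, _⟩ | ⟨he, _⟩
  · exact ⟨t, ht1, by rw [← he, habs, hval]⟩
  · refine ⟨(-t.1, -t.2.1, -t.2.2.1, -t.2.2.2), ht2, ?_⟩
    have : C i j = -(2 * Real.cos (π * p / q)) := by rw [← habs]; linarith
    rw [this, hval, ev_neg]

-- Q2 / Q5 invariance
def InQ2 (z : ℝ) : Prop := ∃ a b : ℚ, z = ev a b 0 0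
def InQ5 (z : ℝ) : Prop := ∃ a c : ℚ, z = ev a 0 c 0

lemma InQ2_mutate (h : ∀ i j, InQ2 (C i j)) (k : Fin n) : ∀ i j, InQ2 (mutate C k i j) := by
  intro i j
  obtain ⟨a, b, hij⟩ := h i j
  obtain ⟨a1, b1, hik⟩ := h i k
  obtain ⟨a2, b2, hkj⟩ := h k j
  simp only [mutate]
  split
  · exact ⟨-a, -b, by rw [hij, ev_neg]; norm_num⟩
  · have habs1 : ∃ a' b' : ℚ, |C i k| = ev a' b' 0 0 := by
      rcases abs_choice (C i k) with he | he
      · exact ⟨a1, b1, by rw [he, hik]⟩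
      · exact ⟨-a1, -b1, by rw [he, hik, ev_neg]; norm_num⟩
    have habs2 : ∃ a' b' : ℚ, |C k j| = ev a' b' 0 0 := by
      rcases abs_choice (C k j) with he | he
      · exact ⟨a2, b2, by rw [he, hkj]⟩
      · exact ⟨-a2, -b2, by rw [he, hkj, ev_neg]; norm_num⟩
    obtain ⟨a3, b3, h3⟩ := habs1
    obtain ⟨a4, b4, h4⟩ := habs2
    refine ⟨a + (a3*a2 + 2*b3*b2 + a1*a4 + 2*b1*b4)/2, b + (a3*b2 + a2*b3 + a1*b4 + a4*b1)/2, ?_⟩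
    rw [hij, h3, h4, hik, hkj]
    unfold ev
    push_cast
    linear_combination (((b3:ℝ)*(b2:ℝ) + (b1:ℝ)*(b4:ℝ))/2) * s2_sq

lemma InQ5_mutate (h : ∀ i j, InQ5 (C i j)) (k : Fin n) : ∀ i j, InQ5 (mutate C k i j) := by
  intro i j
  obtain ⟨a, b, hij⟩ := h i j
  obtain ⟨a1, b1, hik⟩ := h i k
  obtain ⟨a2, b2, hkj⟩ := h k j
  simp only [mutate]
  split
  · exact ⟨-a, -b, by rw [hij, ev_neg]; norm_num⟩
  · have habs1 : ∃ a' b' : ℚ, |C i k| = ev a' 0 b' 0 := by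
      rcases abs_choice (C i k) with he | he
      · exact ⟨a1, b1, by rw [he, hik]⟩
      · exact ⟨-a1, -b1, by rw [he, hik, ev_neg]; norm_num⟩
    have habs2 : ∃ a' b' : ℚ, |C k j| = ev a' 0 b' 0 := by
      rcases abs_choice (C k j) with he | he
      · exact ⟨a2, b2, by rw [he, hkj]⟩
      · exact ⟨-a2, -b2, by rw [he, hkj, ev_neg]; norm_num⟩
    obtain ⟨a3, b3, h3⟩ := habs1
    obtain ⟨a4, b4, h4⟩ := habs2
    refine ⟨a + (a3*a2 + 5*b3*b2 + a1*a4 + 5*b1*b4)/2, b + (a3*b2 + a2*b3 + a1*b4 + a4*b1)/2, ?_⟩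
    rw [hij, h3, h4, hik, hkj]
    unfold ev
    push_cast
    linear_combination (((b3:ℝ)*(b2:ℝ) + (b1:ℝ)*(b4:ℝ))/2) * s5_sq

lemma class_InQ2 (hB : ∀ i j, InQ2 (B i j)) (h : MutEquiv B C) : ∀ i j, InQ2 (C i j) := by
  obtain ⟨C', σ, hr, rfl⟩ := h
  have hC' : ∀ i j, InQ2 (C' i j) := by
    induction hr with
    | refl => exact hB
    | tail _ hstep ih => obtain ⟨k, rfl⟩ := hstep; exact InQ2_mutate ih k
  intro i j
  exact hC' (σ i) (σ j)

lemma class_InQ5 (hB : ∀ i j, InQ5 (B i j)) (h : MutEquiv B C) : ∀ i j, InQ5 (C i j) := by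
  obtain ⟨C', σ, hr, rfl⟩ := h
  have hC' : ∀ i j, InQ5 (C' i j) := by
    induction hr with
    | refl => exact hB
    | tail _ hstep ih => obtain ⟨k, rfl⟩ := hstep; exact InQ5_mutate ih k
  intro i j
  exact hC' (σ i) (σ j)

lemma IsS2_not_InQ5 {z : ℝ} (h : IsS2 z) : ¬ InQ5 z := by
  rintro ⟨a, c, he⟩
  rcases h with rfl | rfl <;>
  · obtain ⟨_, h2, _, _⟩ := ev_inj he
    norm_num at h2

lemma IsPhiV_not_InQ2 {z : ℝ} (h : IsPhiV z) : ¬ InQ2 z := by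
  rintro ⟨a, b, he⟩
  obtain ⟨a', c', _, hc, rfl⟩ := h
  obtain ⟨_, _, h3, _⟩ := ev_inj he
  rcases hc with rfl | rfl <;> norm_num at h3

lemma IsRatV_InQ2 {z : ℝ} (h : IsRatV z) : InQ2 z := by obtain ⟨a, rfl⟩ := h; exact ⟨a, 0, rfl⟩
lemma IsRatV_InQ5 {z : ℝ} (h : IsRatV z) : InQ5 z := by obtain ⟨a, rfl⟩ := h; exact ⟨a, 0, rfl⟩
lemma IsS2_InQ2 {z : ℝ} (h : IsS2 z) : InQ2 z := by
  rcases h with rfl | rfl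
  · exact ⟨0, 1, rfl⟩
  · exact ⟨0, -1, rfl⟩
lemma IsPhiV_InQ5 {z : ℝ} (h : IsPhiV z) : InQ5 z := by
  obtain ⟨a, c, _, _, rfl⟩ := h; exact ⟨a, c, rfl⟩

-- Part D : Lemma A
lemma skew_diag {C : Matrix (Fin n) (Fin n) ℝ} (h : IsSkewSymmetric C) (i : Fin n) :
    C i i = 0 := by have := h i i; linarith

lemma SC_d_zero {t : ℚ×ℚ×ℚ×ℚ} (h : t ∈ SC) : t.2.2.2 = 0 := by
  simp only [SC, List.mem_cons, List.not_mem_nil, or_false] at h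
  rcases h with rfl|rfl|rfl|rfl|rfl|rfl|rfl|rfl|rfl|rfl|rfl <;> rfl

lemma inS_d_zero {a b c d : ℚ} (h : inS (ev a b c d)) : d = 0 := by
  have ht := inS_tuple h
  simp only [SC, List.mem_cons, List.not_mem_nil, or_false, Prod.mk.injEq] at ht
  rcases ht with h|h|h|h|h|h|h|h|h|h|h <;> exact h.2.2.2

lemma inS_bcases {a b c d : ℚ} (h : inS (ev a b c d)) (hb : b ≠ 0) :
    a = 0 ∧ c = 0 ∧ d = 0 ∧ (b = 1 ∨ b = -1) := by
  have ht := inS_tuple h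
  simp only [SC, List.mem_cons, List.not_mem_nil, or_false, Prod.mk.injEq] at ht
  rcases ht with ⟨rfl,rfl,rfl,rfl⟩|⟨rfl,rfl,rfl,rfl⟩|⟨rfl,rfl,rfl,rfl⟩|⟨rfl,rfl,rfl,rfl⟩|⟨rfl,rfl,rfl,rfl⟩|⟨rfl,rfl,rfl,rfl⟩|⟨rfl,rfl,rfl,rfl⟩|⟨rfl,rfl,rfl,rfl⟩|⟨rfl,rfl,rfl,rfl⟩|⟨rfl,rfl,rfl,rfl⟩|⟨rfl,rfl,rfl,rfl⟩ <;>
    (revert hb; norm_num)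

lemma inS_ccases {a b c d : ℚ} (h : inS (ev a b c d)) (hc : c ≠ 0) :
    b = 0 ∧ d = 0 ∧ (a = 1/2 ∨ a = -1/2) ∧ (c = 1/2 ∨ c = -1/2) := by
  have ht := inS_tuple h
  simp only [SC, List.mem_cons, List.not_mem_nil, or_false, Prod.mk.injEq] at ht
  rcases ht with ⟨rfl,rfl,rfl,rfl⟩|⟨rfl,rfl,rfl,rfl⟩|⟨rfl,rfl,rfl,rfl⟩|⟨rfl,rfl,rfl,rfl⟩|⟨rfl,rfl,rfl,rfl⟩|⟨rfl,rfl,rfl,rfl⟩|⟨rfl,rfl,rfl,rfl⟩|⟨rfl,rfl,rfl,rfl⟩|⟨rfl,rfl,rfl,rfl⟩|⟨rfl,rfl,rfl,rfl⟩|⟨rfl,rfl,rfl,rfl⟩ <;>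
    (revert hc; norm_num)

lemma IsPhiV_of_inS_c {a Cc : ℚ} (h : inS (ev a 0 Cc 0)) (hc : Cc ≠ 0) :
    IsPhiV (ev a 0 Cc 0) := by
  obtain ⟨-, -, ha, hcc⟩ := inS_ccases h hc
  exact ⟨a, Cc, ha, hcc, rfl⟩

lemma IsS2_of_inS_b {a b : ℚ} (h : inS (ev a b 0 0)) (hb : b ≠ 0) :
    IsS2 (ev a b 0 0) := by
  obtain ⟨ha, -, -, hbv⟩ := inS_bcases h hb
  rcases hbv with rfl | rfl
  · exact Or.inl (by rw [ha])
  · exact Or.inr (by rw [ha])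

lemma mutTerm_ne_zero {x y : ℝ} (h : mutTerm x y ≠ 0) : x ≠ 0 ∧ y ≠ 0 := by
  constructor
  · rintro rfl; exact h (by simp [mutTerm])
  · rintro rfl; exact h (by simp [mutTerm])

lemma abs_IsPhiV {z : ℝ} (h : IsPhiV z) : IsPhiV |z| := by
  rcases abs_choice z with he | he <;> rw [he]
  · exact h
  · exact IsPhiV_neg h

lemma mutate_free {C : Matrix (Fin n) (Fin n) ℝ} {i j k : Fin n}
    (hi : i ≠ k) (hj : j ≠ k) :
    mutate C k i j = C i j + mutTerm (C i k) (C k j) := by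
  simp only [mutate, mutTerm]
  rw [if_neg]
  rintro (h | h)
  · exact hi h
  · exact hj h

lemma mutate_incident {C : Matrix (Fin n) (Fin n) ℝ} {i j k : Fin n}
    (h : i = k ∨ j = k) : mutate C k i j = -C i j := by
  simp only [mutate]
  rw [if_pos h]

lemma mutTerm_rat (a b : ℚ) :
    mutTerm (ev a 0 0 0) (ev b 0 0 0) = ev ((|a| * b + a * |b|)/2) 0 0 0 := by
  unfold mutTerm
  simp only [abs_rat, ev_rat]
  push_cast; ring

lemma IsS2_form {z : ℝ} (h : IsS2 z) : ∃ e : ℚ, (e = 1 ∨ e = -1) ∧ z = ev 0 e 0 0 := by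
  rcases h with rfl | rfl
  · exact ⟨1, Or.inl rfl, rfl⟩
  · exact ⟨-1, Or.inr rfl, rfl⟩

section lemA
variable {B : Matrix (Fin n) (Fin n) ℝ}
variable (hB : IsSkewSymmetric B)
variable (h1 : ∀ C, MutEquiv B C → ∀ i j, i ≠ j →
      C i j = 0 ∨ ∃ p q : ℕ, 2 * p < q ∧ q ≤ 5 ∧ |C i j| = 2 * Real.cos (π * p / q))

include hB h1

lemma bang : ∀ C, MutEquiv B C → ∀ i k j, IsS2 (C i k) → IsPhiV (C k j) →
    0 < C i k * C k j → False := by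
  intro C hC i k j hx hy hpos
  have hsk := mutEquiv_skew hB hC
  have hik : i ≠ k := by rintro rfl; exact IsS2_ne_zero hx (skew_diag hsk _)
  have hjk : j ≠ k := by rintro rfl; exact IsPhiV_ne_zero hy (skew_diag hsk _)
  have hC' := mutEquiv_mutate hC k
  have hval : mutate C k i j = C i j + mutTerm (C i k) (C k j) := mutate_free hik hjk
  obtain ⟨a', c', ha', hc', hyv⟩ := hy
  have hc'0 : c' ≠ 0 := by rcases hc' with rfl | rfl <;> norm_num
  have hterm : mutTerm (C i k) (C k j) = ev 0 (1*a') 0 (1*c') := by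
    rw [mutTerm_pos_eq hpos, abs_IsS2 hx, hyv, ev_mul_s2phi]
  obtain ⟨t, htSC, hts⟩ := class_inS hB h1 hC i j
  have hfin : inS (mutate C k i j) := class_inS hB h1 hC' i j
  rw [hval, hts, hterm, ev_add] at hfin
  have hd := inS_d_zero hfin
  have htd : t.2.2.2 = 0 := SC_d_zero htSC
  rw [htd] at hd
  simp at hd
  exact hc'0 hd

lemma lemA : ∀ C, MutEquiv B C → ∀ i k j, IsS2 (C i k) → IsPhiV (C k j) → False := by
  intro C hC i k j hx hy
  have hsk := mutEquiv_skew hB hC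
  have hik : i ≠ k := by rintro rfl; exact IsS2_ne_zero hx (skew_diag hsk _)
  have hkj : k ≠ j := by rintro rfl; exact IsPhiV_ne_zero hy (skew_diag hsk _)
  rcases lt_trichotomy (C i k * C k j) 0 with hneg | h0 | hpos
  · -- mutate at j
    have hij : i ≠ j := by
      rintro rfl
      have h2 : -C k i = C i k := by have := hsk i k; linarith
      exact not_IsS2_and_IsPhiV hx (h2 ▸ IsPhiV_neg hy)
    have hC' := mutEquiv_mutate hC j
    have hvalik : mutate C j i k = C i k + mutTerm (C i j) (C j k) :=
      mutate_free hij hkj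
    have hvalkj : mutate C j k j = -C k j := mutate_incident (Or.inr rfl)
    rcases le_or_gt (C i j * C j k) 0 with hle | hgt
    · have hT : mutTerm (C i j) (C j k) = 0 := mutTerm_nonpos hle
      apply bang hB h1 (mutate C j) hC' i k j
      · rw [hvalik, hT, add_zero]; exact hx
      · rw [hvalkj]; exact IsPhiV_neg hy
      · rw [hvalik, hT, add_zero, hvalkj, mul_neg]; linarith
    · have hTval : mutTerm (C i j) (C j k) = |C i j| * C j k := mutTerm_pos_eq hgt
      obtain ⟨a', c', ha', hc', hyv⟩ := hy
      have hc'0 : c' ≠ 0 := by rcases hc' with rfl | rfl <;> norm_num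
      have hjkv : C j k = ev (-a') 0 (-c') 0 := by
        have h' : C j k = -C k j := by have := hsk k j; linarith
        rw [h', hyv, ev_neg]
        norm_num
      obtain ⟨e, he, hxv⟩ := IsS2_form hx
      have he0 : e ≠ 0 := by rcases he with rfl | rfl <;> norm_num
      have hfin : inS (mutate C j i k) := class_inS hB h1 hC' i k
      rcases inS_trichotomy (class_inS hB h1 hC i j) with hsS2 | hsPhi | hsRat
      · -- s is ±√2 : new (i,k) entry has nonzero √10 part
        have hterm : mutTerm (C i j) (C j k) = ev 0 (1*(-a')) 0 (1*(-c')) := by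
          rw [hTval, abs_IsS2 hsS2, hjkv, ev_mul_s2phi]
        rw [hvalik, hxv, hterm, ev_add] at hfin
        have hd := inS_d_zero hfin
        simp at hd
        exact hc'0 hd
      · -- s is a φ value
        obtain ⟨a2, c2, ha2, hc2, hyv2⟩ := abs_IsPhiV hsPhi
        have hterm : mutTerm (C i j) (C j k) =
            ev (a2*(-a') + 5*c2*(-c')) 0 (a2*(-c') + (-a')*c2) 0 := by
          rw [hTval, hyv2, hjkv, ev_mul_phiphi]
        rw [hvalik, hxv, hterm, ev_add] at hfin
        obtain ⟨hA, -, -, -⟩ := inS_bcases hfin (by simpa using he0)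
        rcases ha2 with rfl|rfl <;> rcases hc2 with rfl|rfl <;>
          rcases ha' with rfl|rfl <;> rcases hc' with rfl|rfl <;> norm_num at hA
      · -- s rational (nonzero)
        obtain ⟨s0, hsv⟩ := hsRat
        have hs0 : s0 ≠ 0 := by
          rintro rfl
          have : C i j = 0 := by rw [hsv, ev_rat]; norm_num
          rw [this] at hgt; simp at hgt
        have hterm : mutTerm (C i j) (C j k) =
            ev (|s0| * (-a')) (|s0| * 0) (|s0| * (-c')) (|s0| * 0) := by
          rw [hTval, hsv, abs_rat, hjkv, ev_rat, ev_mul_rat]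
        rw [hvalik, hxv, hterm, ev_add] at hfin
        obtain ⟨-, hc, -, -⟩ := inS_bcases hfin (by simpa using he0)
        have hs0' : |s0| ≠ 0 := by simpa using hs0
        have hcc : |s0| * (-c') = 0 := by linarith [hc]
        rcases mul_eq_zero.mp hcc with h' | h'
        · exact hs0' h'
        · rcases hc' with rfl|rfl <;> norm_num at h'
  · exact absurd h0 (mul_ne_zero (IsS2_ne_zero hx) (IsPhiV_ne_zero hy))
  · exact bang hB h1 C hC i k j hx hy hpos

end lemA

-- Part E : main induction
section main
variable {B : Matrix (Fin n) (Fin n) ℝ}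
variable (hB : IsSkewSymmetric B)
variable (h1 : ∀ C, MutEquiv B C → ∀ i j, i ≠ j →
      C i j = 0 ∨ ∃ p q : ℕ, 2 * p < q ∧ q ≤ 5 ∧ |C i j| = 2 * Real.cos (π * p / q))

include hB h1

lemma subStep (L0 : ℕ)
    (IH : ∀ L', L' < L0 + 1 → ∀ C, MutEquiv B C → ∀ p : ℕ → Fin n,
      (∀ m, m < L' → C (p m) (p (m+1)) ≠ 0) →
      ∀ u, IsS2 (C u (p 0)) → ∀ w, IsPhiV (C (p L') w) → False)
    {C : Matrix (Fin n) (Fin n) ℝ} (hC : MutEquiv B C) (p : ℕ → Fin n)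
    (hpath : ∀ m, m < L0 + 1 → C (p m) (p (m+1)) ≠ 0)
    {u : Fin n} (hu : IsS2 (C u (p 0))) {w : Fin n} (hw : IsPhiV (C (p (L0+1)) w))
    {tq : ℚ} (ht : C (p 0) (p 1) = ev tq 0 0 0)
    (hpos : 0 < C u (p 0) * C (p 0) (p 1)) : False := by
  have hsk := mutEquiv_skew hB hC
  have ht0 : C (p 0) (p 1) ≠ 0 := hpath 0 (by omega)
  have htq : tq ≠ 0 := by rintro rfl; exact ht0 (by rw [ht, ev_rat]; norm_num)
  have hup0 : u ≠ p 0 := by rintro heq; exact IsS2_ne_zero hu (heq ▸ skew_diag hsk _)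
  have hp10 : p 1 ≠ p 0 := by
    intro heq; exact ht0 (by rw [heq]; exact skew_diag hsk _)
  rcases inS_trichotomy (class_inS hB h1 hC u (p 1)) with hsS2 | hsPhi | hsRat
  · exact IH L0 (by omega) C hC (fun m => p (m+1))
      (fun m hm => hpath (m+1) (by omega)) u hsS2 w hw
  · have hx0 : IsS2 (C (p 0) u) := by
      rw [hsk u (p 0)]; exact IsS2_neg hu
    exact lemA hB h1 C hC (p 0) u (p 1) hx0 hsPhi
  obtain ⟨s0, hs⟩ := hsRat
  set D := mutate C (p 0) with hD
  have hCD : MutEquiv B D := mutEquiv_mutate hC (p 0)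
  obtain ⟨e, he, hxv⟩ := IsS2_form hu
  have he0 : e ≠ 0 := by rcases he with rfl|rfl <;> norm_num
  have hterm : mutTerm (C u (p 0)) (C (p 0) (p 1)) = ev 0 (1*tq) 0 (1*0) := by
    rw [mutTerm_pos_eq hpos, abs_IsS2 hu, ht, ev_mul_s2phi]
  have hDup1 : D u (p 1) = ev s0 tq 0 0 := by
    rw [hD, mutate_free hup0 hp10, hs, hterm, ev_add]; norm_num
  have hDinS := class_inS hB h1 hCD u (p 1)
  rw [hDup1] at hDinS
  have hnew : IsS2 (D u (p 1)) := by
    rw [hDup1]; exact IsS2_of_inS_b hDinS htq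
  -- interior edges survive
  have hedges : ∀ m, m < L0 → D (p (m+1)) (p (m+2)) ≠ 0 := by
    intro m hm
    by_cases hcase : p (m+1) = p 0 ∨ p (m+2) = p 0
    · rw [hD, mutate_incident hcase]
      exact neg_ne_zero.mpr (hpath (m+1) (by omega))
    · push_neg at hcase
      rw [hD, mutate_free hcase.1 hcase.2]
      by_cases hz : mutTerm (C (p (m+1)) (p 0)) (C (p 0) (p (m+2))) = 0
      · rw [hz, add_zero]; exact hpath (m+1) (by omega)
      · exfalso
        obtain ⟨h3, h4⟩ := mutTerm_ne_zero hz
        refine IH (L0 - m) (by omega) C hC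
          (fun m' => if m' = 0 then p 0 else p (m + 1 + m')) ?_ u ?_ w ?_
        · intro m' hm'
          match m', hm' with
          | 0, hm' => exact h4
          | (m''+1), hm' => exact hpath (m + 1 + (m''+1)) (by omega)
        · exact hu
        · have hne : L0 - m ≠ 0 := by omega
          simp only [if_neg hne]
          rw [show m + 1 + (L0 - m) = L0 + 1 by omega]
          exact hw
  -- φ-edge survives
  have hphi : IsPhiV (D (p (L0+1)) w) := by
    by_cases hcase : p (L0+1) = p 0 ∨ w = p 0
    · rw [hD, mutate_incident hcase]; exact IsPhiV_neg hw
    · push_neg at hcase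
      by_cases hz : mutTerm (C (p (L0+1)) (p 0)) (C (p 0) w) = 0
      · rw [hD, mutate_free hcase.1 hcase.2, hz, add_zero]; exact hw
      · obtain ⟨h3, h4⟩ := mutTerm_ne_zero hz
        rcases inS_trichotomy (class_inS hB h1 hC (p (L0+1)) (p 0)) with he2 | he2 | he2
        · have hx2 : IsS2 (C (p 0) (p (L0+1))) := by
            rw [hsk (p (L0+1)) (p 0)]; exact IsS2_neg he2
          exact ((IH 0 (by omega) C hC (fun _ => p (L0+1))
            (fun m hm => absurd hm (by omega)) (p 0) hx2 w hw)).elim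
        · have hφ2 : IsPhiV (C (p 0) (p (L0+1))) := by
            rw [hsk (p (L0+1)) (p 0)]; exact IsPhiV_neg he2
          exact (lemA hB h1 C hC u (p 0) (p (L0+1)) hu hφ2).elim
        · obtain ⟨e2, he2v⟩ := he2
          rcases inS_trichotomy (class_inS hB h1 hC (p 0) w) with hr | hr | hr
          · have hwφ : IsPhiV (C w (p (L0+1))) := by
              rw [hsk (p (L0+1)) w]; exact IsPhiV_neg hw
            exact ((IH 0 (by omega) C hC (fun _ => w)
              (fun m hm => absurd hm (by omega)) (p 0) hr (p (L0+1)) hwφ)).elim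
          · exact (lemA hB h1 C hC u (p 0) w hu hr).elim
          · obtain ⟨r0, hrv⟩ := hr
            obtain ⟨aφ, cφ, haφ, hcφ, hwv⟩ := hw
            have hcφ0 : cφ ≠ 0 := by rcases hcφ with rfl|rfl <;> norm_num
            have hval2 : D (p (L0+1)) w = ev (aφ + (|e2| * r0 + e2 * |r0|)/2) 0 cφ 0 := by
              rw [hD, mutate_free hcase.1 hcase.2, hwv, he2v, hrv, mutTerm_rat, ev_add]
              norm_num
            rw [hval2]
            exact IsPhiV_of_inS_c (hval2 ▸ class_inS hB h1 hCD (p (L0+1)) w) hcφ0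
  exact IH L0 (by omega) D hCD (fun m => p (m+1)) hedges u hnew w hphi

lemma no_path : ∀ L : ℕ, ∀ C, MutEquiv B C → ∀ p : ℕ → Fin n,
    (∀ m, m < L → C (p m) (p (m+1)) ≠ 0) →
    ∀ u, IsS2 (C u (p 0)) → ∀ w, IsPhiV (C (p L) w) → False := by
  intro L
  induction L using Nat.strong_induction_on with
  | _ L IH =>
  intro C hC p hpath u hu w hw
  cases L with
  | zero => exact lemA hB h1 C hC u (p 0) w hu hw
  | succ L0 =>
  have hsk := mutEquiv_skew hB hC
  have ht0 : C (p 0) (p 1) ≠ 0 := hpath 0 (by omega)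
  rcases inS_trichotomy (class_inS hB h1 hC (p 0) (p 1)) with htS2 | htPhi | htRat
  · exact IH L0 (by omega) C hC (fun m => p (m+1))
      (fun m hm => hpath (m+1) (by omega)) (p 0) htS2 w hw
  · exact lemA hB h1 C hC u (p 0) (p 1) hu htPhi
  obtain ⟨tq, htv⟩ := htRat
  rcases lt_trichotomy (C u (p 0) * C (p 0) (p 1)) 0 with hneg | h0 | hpos
  · -- negative product : first mutate at p 1 to flip the sign
    have hp01 : p 0 ≠ p 1 := by
      intro heq; exact ht0 (by rw [heq]; exact skew_diag hsk _)
    have hp1p0 : C (p 1) (p 0) = ev (-tq) 0 0 0 := by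
      rw [hsk (p 0) (p 1), htv, ev_neg]; norm_num
    have hup1 : u ≠ p 1 := by
      intro heq
      obtain ⟨e, he, hxv⟩ := IsS2_form hu
      rw [heq, hp1p0] at hxv
      obtain ⟨-, h2, -, -⟩ := ev_inj hxv
      rcases he with rfl | rfl <;> norm_num at h2
    rcases inS_trichotomy (class_inS hB h1 hC u (p 1)) with hsS2 | hsPhi | hsRat
    · exact IH L0 (by omega) C hC (fun m => p (m+1))
        (fun m hm => hpath (m+1) (by omega)) u hsS2 w hw
    · have hx0 : IsS2 (C (p 0) u) := by rw [hsk u (p 0)]; exact IsS2_neg hu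
      exact lemA hB h1 C hC (p 0) u (p 1) hx0 hsPhi
    obtain ⟨s0, hsv⟩ := hsRat
    set D := mutate C (p 1) with hD
    have hCD : MutEquiv B D := mutEquiv_mutate hC (p 1)
    obtain ⟨e, he, hxv⟩ := IsS2_form hu
    have he0 : e ≠ 0 := by rcases he with rfl|rfl <;> norm_num
    have hDval : D u (p 0) = ev ((|s0| * -tq + s0 * |(-tq)|)/2) e 0 0 := by
      rw [hD, mutate_free hup1 hp01, hxv, hsv, hp1p0, mutTerm_rat, ev_add]
      norm_num
    have hDinS := class_inS hB h1 hCD u (p 0)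
    rw [hDval] at hDinS
    obtain ⟨hA, -, -, -⟩ := inS_bcases hDinS he0
    have hDx : D u (p 0) = C u (p 0) := by rw [hDval, hA, hxv]
    have hDt : D (p 0) (p 1) = -C (p 0) (p 1) := by
      rw [hD]; exact mutate_incident (Or.inr rfl)
    -- interior edges survive
    have hedges : ∀ m, m < L0 → D (p (m+1)) (p (m+2)) ≠ 0 := by
      intro m hm
      by_cases hcase : p (m+1) = p 1 ∨ p (m+2) = p 1
      · rw [hD, mutate_incident hcase]
        exact neg_ne_zero.mpr (hpath (m+1) (by omega))
      · push_neg at hcase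
        rw [hD, mutate_free hcase.1 hcase.2]
        by_cases hz : mutTerm (C (p (m+1)) (p 1)) (C (p 1) (p (m+2))) = 0
        · rw [hz, add_zero]; exact hpath (m+1) (by omega)
        · exfalso
          obtain ⟨h3, h4⟩ := mutTerm_ne_zero hz
          have hm1 : m ≠ 0 := by rintro rfl; exact hcase.1 rfl
          refine IH (L0 + 1 - m) (by omega) C hC
            (fun m' => if m' = 0 then p 0 else if m' = 1 then p 1 else p (m + m')) ?_ u ?_ w ?_
          · intro m' hm'
            match m', hm' with
            | 0, hm' => exact ht0
            | 1, hm' => exact h4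
            | (m''+2), hm' => exact hpath (m + (m''+2)) (by omega)
          · exact hu
          · have hne0 : L0 + 1 - m ≠ 0 := by omega
            have hne1 : L0 + 1 - m ≠ 1 := by omega
            simp only [if_neg hne0, if_neg hne1]
            rw [show m + (L0 + 1 - m) = L0 + 1 by omega]
            exact hw
    -- φ-edge survives
    have hphi : IsPhiV (D (p (L0+1)) w) := by
      by_cases hcase : p (L0+1) = p 1 ∨ w = p 1
      · rw [hD, mutate_incident hcase]; exact IsPhiV_neg hw
      · push_neg at hcase
        by_cases hz : mutTerm (C (p (L0+1)) (p 1)) (C (p 1) w) = 0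
        · rw [hD, mutate_free hcase.1 hcase.2, hz, add_zero]; exact hw
        · obtain ⟨h3, h4⟩ := mutTerm_ne_zero hz
          have hL1 : L0 ≠ 0 := by rintro rfl; exact hcase.1 rfl
          rcases inS_trichotomy (class_inS hB h1 hC (p (L0+1)) (p 1)) with he3 | he3 | he3
          · have hx3 : IsS2 (C (p 1) (p (L0+1))) := by
              rw [hsk (p (L0+1)) (p 1)]; exact IsS2_neg he3
            exact ((IH 0 (by omega) C hC (fun _ => p (L0+1))
              (fun m hm => absurd hm (by omega)) (p 1) hx3 w hw)).elim
          · have hφ3 : IsPhiV (C (p 1) (p (L0+1))) := by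
              rw [hsk (p (L0+1)) (p 1)]; exact IsPhiV_neg he3
            exact ((IH 1 (by omega) C hC (fun m' => if m' = 0 then p 0 else p 1)
              (by intro m' hm'; match m', hm' with | 0, _ => exact ht0)
              u hu (p (L0+1)) hφ3)).elim
          · obtain ⟨e3, he3v⟩ := he3
            rcases inS_trichotomy (class_inS hB h1 hC (p 1) w) with hq | hq | hq
            · have hwφ : IsPhiV (C w (p (L0+1))) := by
                rw [hsk (p (L0+1)) w]; exact IsPhiV_neg hw
              exact ((IH 0 (by omega) C hC (fun _ => w)
                (fun m hm => absurd hm (by omega)) (p 1) hq (p (L0+1)) hwφ)).elim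
            · exact ((IH 1 (by omega) C hC (fun m' => if m' = 0 then p 0 else p 1)
                (by intro m' hm'; match m', hm' with | 0, _ => exact ht0)
                u hu w hq)).elim
            · obtain ⟨q0, hqv⟩ := hq
              obtain ⟨aφ, cφ, haφ, hcφ, hwv⟩ := hw
              have hcφ0 : cφ ≠ 0 := by rcases hcφ with rfl|rfl <;> norm_num
              have hval2 : D (p (L0+1)) w = ev (aφ + (|e3| * q0 + e3 * |q0|)/2) 0 cφ 0 := by
                rw [hD, mutate_free hcase.1 hcase.2, hwv, he3v, hqv, mutTerm_rat, ev_add]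
                norm_num
              rw [hval2]
              exact IsPhiV_of_inS_c (hval2 ▸ class_inS hB h1 hCD (p (L0+1)) w) hcφ0
    -- apply subStep to D
    refine subStep hB h1 L0 IH hCD p ?_ (u := u) ?_ (w := w) ?_ (tq := -tq) ?_ ?_
    · intro m hm
      match m, hm with
      | 0, hm => rw [hDt]; exact neg_ne_zero.mpr ht0
      | (m0+1), hm => exact hedges m0 (by omega)
    · rw [hDx]; exact hu
    · exact hphi
    · rw [hDt, htv, ev_neg]; norm_num
    · rw [hDx, hDt, mul_neg]; linarith
  · exact absurd h0 (mul_ne_zero (IsS2_ne_zero hu) ht0)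
  · exact subStep hB h1 L0 IH hC p hpath hu hw htv hpos

end main

-- Part F : assembly
lemma IsPhiV_of_abs {z : ℝ} {a c : ℚ} (ha : a = 1/2 ∨ a = -1/2)
    (hc : c = 1/2 ∨ c = -1/2) (hz : |z| = ev a 0 c 0) : IsPhiV z := by
  rcases abs_cases z with ⟨he, -⟩ | ⟨he, -⟩
  · exact ⟨a, c, ha, hc, by rw [← he, hz]⟩
  · have hzv : z = -(ev a 0 c 0) := by rw [← hz]; linarith
    refine ⟨-a, -c, ?_, ?_, by rw [hzv, ev_neg]; norm_num⟩
    · rcases ha with rfl | rfl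
      · exact Or.inr (by norm_num)
      · exact Or.inl (by norm_num)
    · rcases hc with rfl | rfl
      · exact Or.inr (by norm_num)
      · exact Or.inl (by norm_num)


end Auxiliary

/-- If the highest denominator of the mutation class of a connected mutation-finite
quiver is `5`, then no quiver in its mutation class has an arrow of weight `√2`. -/
theorem denominator5_no_denominator4 {n : ℕ} (B : Matrix (Fin n) (Fin n) ℝ)
    (hskew : IsSkewSymmetric B) (hconn : Connected B) (hfin : MutationFinite B)
    (hhd : HighestDenom B 5) :
    ∀ C, MutEquiv B C → ∀ i j, |C i j| ≠ Real.sqrt 2 := by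
  intro C hC i j habs
  obtain ⟨h1, h2⟩ := hhd
  have hCij : IsS2 (C i j) := by
    rcases (abs_eq (Real.sqrt_nonneg 2)).mp habs with he | he
    · exact Or.inl (by rw [he, ev_s2])
    · exact Or.inr (by rw [he, ev_neg_s2])
  have hBs2 : ∃ a b, IsS2 (B a b) := by
    by_contra hno
    push_neg at hno
    have hall : ∀ a b, InQ5 (B a b) := by
      intro a b
      rcases inS_trichotomy (class_inS hskew h1 (mutEquiv_self B) a b) with h | h | h
      · exact absurd h (hno a b)
      · exact IsPhiV_InQ5 h
      · exact IsRatV_InQ5 h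
    exact IsS2_not_InQ5 hCij (class_InQ5 hall hC i j)
  obtain ⟨C0, hC0, i0, j0, p0, hp0, hp05, hgcd, habs0⟩ := h2
  have hphiC0 : IsPhiV (C0 i0 j0) := by
    have hp2 : p0 ≤ 2 := by omega
    interval_cases p0
    · refine IsPhiV_of_abs (Or.inl rfl) (Or.inl rfl) ?_
      rw [habs0]
      push_cast
      rw [show π * 1 / 5 = π / 5 by ring, Real.cos_pi_div_five]
      unfold ev; push_cast; ring
    · refine IsPhiV_of_abs (a := -1/2) (c := 1/2) (Or.inr (by norm_num)) (Or.inl rfl) ?_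
      rw [habs0]
      push_cast
      exact cos_2pi5
  have hBphi : ∃ a b, IsPhiV (B a b) := by
    by_contra hno
    push_neg at hno
    have hall : ∀ a b, InQ2 (B a b) := by
      intro a b
      rcases inS_trichotomy (class_inS hskew h1 (mutEquiv_self B) a b) with h | h | h
      · exact IsS2_InQ2 h
      · exact absurd h (hno a b)
      · exact IsRatV_InQ2 h
    exact IsPhiV_not_InQ2 hphiC0 (class_InQ2 hall hC0 i0 j0)
  obtain ⟨u0, v0, hu0⟩ := hBs2
  obtain ⟨v1, w1, hw1⟩ := hBphi
  have hc' : (toGraph B).Connected := hconn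
  obtain ⟨W⟩ := hc'.preconnected v0 v1
  refine no_path hskew h1 W.length B (mutEquiv_self B) (fun m => W.getVert m) ?_ u0 ?_ w1 ?_
  · intro m hm
    have hadj := W.adj_getVert_succ hm
    simp only [toGraph] at hadj
    rcases (hadj : W.getVert m ≠ W.getVert (m+1) ∧ (B (W.getVert m) (W.getVert (m+1)) ≠ 0 ∨ B (W.getVert (m+1)) (W.getVert m) ≠ 0)).2 with h | h
    · exact h
    · intro h0
      apply h
      have := hskew (W.getVert m) (W.getVert (m+1))
      rw [h0] at this
      exact (by simpa using this : B (W.getVert (m+1)) (W.getVert m) = 0)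
  · show IsS2 (B u0 (W.getVert 0))
    rw [SimpleGraph.Walk.getVert_zero]
    exact hu0
  · show IsPhiV (B (W.getVert W.length) w1)
    rw [SimpleGraph.Walk.getVert_length]
    exact hw1


end RealQuiver
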